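/- Sum AMSE transfer from uplink to downlink: in the multiuser MIMO setup, given uplink power allocations Q_1,…,Q_K, let β = (Σ_{k=1}^K tr(Q_k)) / (Σ_{k=1}^K Re tr(Q_k⁻¹ α_k²)) and define the downlink power allocations P_k = β·α_k²·Q_k⁻¹ for every k. Then the downlink sum AMSE equals the uplink sum AMSE, ξ̄^{DL} = ξ̄^{UL}, and the same sum power is allocated in both channels: Σ_{k=1}^K tr(P_k) = Σ_{k=1}^K tr(Q_k). -/

import Mathlib

open Matrix BigOperators ComplexOrder

noncomputable section

/-- A diagonal complex matrix built from a real vector. -/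
def diagC {n : ℕ} (v : Fin n → ℝ) : Matrix (Fin n) (Fin n) ℂ :=
  Matrix.diagonal (fun i => (v i : ℂ))

/-- The multiuser MIMO setup: `K` users, `N` BS antennas, per-user antenna counts `M k`,
symbol counts `S k`, estimated channels `H k`, transmit/receive filters `G k`, `U k` with
unit-norm columns, invertible real diagonal scaling factors `α k`, Hermitian positive
semidefinite antenna correlation matrices `Rb k`, `Rm k`, channel estimation error variances
`σe2 k ≥ 0` and noise variance `σ2 > 0`. -/
structure MIMOSetup (K N : ℕ) where
  M : Fin K → ℕ
  S : Fin K → ℕ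
  hM : ∀ k, 0 < M k
  hS : ∀ k, 0 < S k
  H : ∀ k : Fin K, Matrix (Fin N) (Fin (M k)) ℂ
  G : ∀ k : Fin K, Matrix (Fin N) (Fin (S k)) ℂ
  U : ∀ k : Fin K, Matrix (Fin (M k)) (Fin (S k)) ℂ
  α : ∀ k : Fin K, Fin (S k) → ℝ
  Rb : Fin K → Matrix (Fin N) (Fin N) ℂ
  Rm : ∀ k : Fin K, Matrix (Fin (M k)) (Fin (M k)) ℂ
  σe2 : Fin K → ℝ
  σ2 : ℝ
  hG : ∀ k i, ((G k)ᴴ * G k) i i = 1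
  hU : ∀ k i, ((U k)ᴴ * U k) i i = 1
  hα : ∀ k i, α k i ≠ 0
  hRb : ∀ k, (Rb k).PosSemidef
  hRm : ∀ k, (Rm k).PosSemidef
  hσe2 : ∀ k, 0 ≤ σe2 k
  hσ2 : 0 < σ2

namespace MIMOSetup

variable {K N : ℕ} (s : MIMOSetup K N)

/-- `α_k` as a diagonal complex matrix. -/
def αM (k : Fin K) : Matrix (Fin (s.S k)) (Fin (s.S k)) ℂ := diagC (s.α k)

/-- `Γ_k^{DL}` for downlink power allocations `P`. -/
def GammaDL (P : ∀ k : Fin K, Matrix (Fin (s.S k)) (Fin (s.S k)) ℂ) (k : Fin K) :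
    Matrix (Fin (s.M k)) (Fin (s.M k)) ℂ :=
  (s.H k)ᴴ * (∑ i, s.G i * P i * (s.G i)ᴴ) * s.H k
    + ((s.σe2 k : ℂ) * (s.Rb k * ∑ i, s.G i * P i * (s.G i)ᴴ).trace) • s.Rm k
    + (s.σ2 : ℂ) • 1

/-- `Γ_c` for uplink power allocations `Q`. -/
def GammaC (Q : ∀ k : Fin K, Matrix (Fin (s.S k)) (Fin (s.S k)) ℂ) :
    Matrix (Fin N) (Fin N) ℂ :=
  (∑ i, (s.H i * s.U i * Q i * (s.U i)ᴴ * (s.H i)ᴴ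
    + ((s.σe2 i : ℂ) * (s.Rm i * (s.U i * Q i * (s.U i)ᴴ)).trace) • s.Rb i))
    + (s.σ2 : ℂ) • 1

/-- The `k`-th user downlink AMSE `ξ̄_k^{DL}`. -/
def xiDLk (P : ∀ k : Fin K, Matrix (Fin (s.S k)) (Fin (s.S k)) ℂ) (k : Fin K) : ℝ :=
  (s.S k : ℝ) + (((P k)⁻¹ * (s.αM k) ^ 2 * (s.U k)ᴴ * s.GammaDL P k * s.U k).trace).re
    - 2 * ((((s.G k)ᴴ * s.H k * s.U k * s.αM k).trace).re)

/-- The `k`-th user uplink AMSE `ξ̄_k^{UL}`. -/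
def xiULk (Q : ∀ k : Fin K, Matrix (Fin (s.S k)) (Fin (s.S k)) ℂ) (k : Fin K) : ℝ :=
  (s.S k : ℝ) + (((Q k)⁻¹ * (s.αM k) ^ 2 * (s.G k)ᴴ * s.GammaC Q * s.G k).trace).re
    - 2 * (((s.αM k * (s.G k)ᴴ * s.H k * s.U k).trace).re)

/-- Downlink sum AMSE `ξ̄^{DL}`. -/
def xiDL (P : ∀ k : Fin K, Matrix (Fin (s.S k)) (Fin (s.S k)) ℂ) : ℝ := ∑ k, s.xiDLk P k

/-- Uplink sum AMSE `ξ̄^{UL}`. -/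
def xiUL (Q : ∀ k : Fin K, Matrix (Fin (s.S k)) (Fin (s.S k)) ℂ) : ℝ := ∑ k, s.xiULk Q k

end MIMOSetup

section AuxLemmas

lemma inv_diag {n : ℕ} (d : Fin n → ℂ) (hd : ∀ i, d i ≠ 0) :
    (Matrix.diagonal d)⁻¹ = Matrix.diagonal (fun i => (d i)⁻¹) := by
  apply Matrix.inv_eq_right_inv
  rw [Matrix.diagonal_mul_diagonal]
  convert Matrix.diagonal_one using 2
  funext i
  exact mul_inv_cancel₀ (hd i)

lemma trace_diag_mul {n : ℕ} (d : Fin n → ℂ) (A : Matrix (Fin n) (Fin n) ℂ) :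
    (Matrix.diagonal d * A).trace = ∑ i, d i * A i i := by
  simp [Matrix.trace, Matrix.diag, Matrix.diagonal_mul]

end AuxLemmas

/-- **Sum AMSE transfer from uplink to downlink.** Given uplink power allocations
`Q_1, …, Q_K`, with `β = (Σ_k tr Q_k) / (Σ_k Re tr (Q_k⁻¹ α_k²))` and downlink power
allocations `P_k = β • α_k² Q_k⁻¹`, the downlink sum AMSE equals the uplink sum AMSE and
the same sum power is allocated in both channels. -/
theorem sum_AMSE_transfer_uplink_to_downlink {K N : ℕ} (hK : 0 < K) (hN : 0 < N)
    (s : MIMOSetup K N)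
    (Q : ∀ k : Fin K, Fin (s.S k) → ℝ) (hQ : ∀ k i, 0 < Q k i)
    (β : ℝ)
    (hβ : β = (∑ k, ((diagC (Q k)).trace).re) /
      (∑ k, (((diagC (Q k))⁻¹ * (s.αM k) ^ 2).trace).re))
    (P : ∀ k : Fin K, Matrix (Fin (s.S k)) (Fin (s.S k)) ℂ)
    (hP : ∀ k, P k = (β : ℂ) • ((s.αM k) ^ 2 * (diagC (Q k))⁻¹)) :
    s.xiDL P = s.xiUL (fun k => diagC (Q k)) ∧
      ∑ k, (P k).trace = ∑ k, (diagC (Q k)).trace := by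
  classical
  have hSpos : ∀ k : Fin K, Nonempty (Fin (s.S k)) := fun k => Fin.pos_iff_nonempty.mp (s.hS k)
  have hKpos : Nonempty (Fin K) := Fin.pos_iff_nonempty.mp hK
  have hQne : ∀ k i, ((Q k i : ℝ) : ℂ) ≠ 0 := fun k i => by
    exact_mod_cast (hQ k i).ne'
  have hαC : ∀ (k : Fin K) i, ((s.α k i : ℝ) : ℂ) ≠ 0 := fun k i => by
    exact_mod_cast s.hα k i
  set q : ∀ k : Fin K, Matrix (Fin (s.S k)) (Fin (s.S k)) ℂ := fun k => diagC (Q k) with hqdef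
  set D : ∀ k : Fin K, Matrix (Fin (s.S k)) (Fin (s.S k)) ℂ :=
    fun k => Matrix.diagonal (fun i => ((s.α k i : ℂ)) ^ 2 * ((Q k i : ℂ))⁻¹) with hDdef
  have hqinv : ∀ k, (q k)⁻¹ = Matrix.diagonal (fun i => ((Q k i : ℂ))⁻¹) := fun k =>
    inv_diag _ (hQne k)
  have hα2 : ∀ k, (s.αM k) ^ 2 = Matrix.diagonal (fun i => ((s.α k i : ℂ)) ^ 2) := by
    intro k
    rw [sq, MIMOSetup.αM, diagC, Matrix.diagonal_mul_diagonal]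
    apply congrArg; funext i; exact (sq _).symm
  have hDq : ∀ k, (q k)⁻¹ * (s.αM k) ^ 2 = D k := by
    intro k
    rw [hqinv, hα2, Matrix.diagonal_mul_diagonal, hDdef]
    apply congrArg; funext i; ring
  have hαq : ∀ k, (s.αM k) ^ 2 * (q k)⁻¹ = D k := by
    intro k
    rw [hqinv, hα2, Matrix.diagonal_mul_diagonal, hDdef]
  -- real trace values
  have htrq : ∀ k, (q k).trace = (((∑ i, Q k i : ℝ)) : ℂ) := by
    intro k
    rw [hqdef]; simp [diagC, Matrix.trace_diagonal]
  have htrD : ∀ k, (D k).trace = (((∑ i, (s.α k i) ^ 2 * (Q k i)⁻¹ : ℝ)) : ℂ) := by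
    intro k
    rw [hDdef]; simp [Matrix.trace_diagonal]
  set num : ℝ := ∑ k, ∑ i, Q k i with hnumdef
  set den : ℝ := ∑ k, ∑ i, (s.α k i) ^ 2 * (Q k i)⁻¹ with hdendef
  have hnumpos : 0 < num := by
    apply Finset.sum_pos _ Finset.univ_nonempty
    intro k _
    exact Finset.sum_pos (fun i _ => hQ k i) Finset.univ_nonempty
  have hdenpos : 0 < den := by
    apply Finset.sum_pos _ Finset.univ_nonempty
    intro k _
    apply Finset.sum_pos _ Finset.univ_nonempty
    intro i _
    exact mul_pos (pow_two_pos_of_ne_zero (s.hα k i)) (inv_pos.mpr (hQ k i))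
  have hβval : β = num / den := by
    rw [hβ, hnumdef, hdendef]
    congr 1
    · apply Finset.sum_congr rfl; intro k _
      rw [show diagC (Q k) = q k from rfl, htrq k]
      exact Complex.ofReal_re _
    · apply Finset.sum_congr rfl; intro k _
      rw [show diagC (Q k) = q k from rfl, hDq k, htrD k]
      exact Complex.ofReal_re _
  have hβpos : 0 < β := hβval ▸ div_pos hnumpos hdenpos
  have hβne : (β : ℂ) ≠ 0 := by exact_mod_cast hβpos.ne'
  have hβden : (β : ℝ) * den = num := by
    rw [hβval]; field_simp
  -- P facts
  have hPsmul : ∀ k, P k = (β : ℂ) • D k := by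
    intro k; rw [hP k, show diagC (Q k) = q k from rfl, hαq k]
  have hPdiag : ∀ k, P k = Matrix.diagonal
      (fun i => (β : ℂ) * (((s.α k i : ℂ)) ^ 2 * ((Q k i : ℂ))⁻¹)) := by
    intro k
    rw [hPsmul k, hDdef, ← Matrix.diagonal_smul]
    apply congrArg; funext i; simp
  have hPinv : ∀ k, (P k)⁻¹ * (s.αM k) ^ 2 = ((β : ℂ))⁻¹ • q k := by
    intro k
    rw [hPdiag k, inv_diag _ (fun i => by
      exact mul_ne_zero hβne (mul_ne_zero (pow_ne_zero 2 (hαC k i)) (inv_ne_zero (hQne k i)))),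
      hα2 k, Matrix.diagonal_mul_diagonal, hqdef]
    show _ = (((β:ℂ))⁻¹ • diagC (Q k))
    rw [diagC, ← Matrix.diagonal_smul]
    apply congrArg; funext i
    rw [Pi.smul_apply, smul_eq_mul]
    have hQ' := hQne k i
    have hα' := hαC k i
    field_simp
  -- V and GammaDL
  set V : Matrix (Fin N) (Fin N) ℂ := ∑ i, s.G i * D i * (s.G i)ᴴ with hVdef
  have hsumGPG : (∑ i, s.G i * P i * (s.G i)ᴴ) = (β : ℂ) • V := by
    rw [hVdef, Finset.smul_sum]
    apply Finset.sum_congr rfl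
    intro i _
    rw [hPsmul i, Matrix.mul_smul, Matrix.smul_mul]
  have hΓDL : ∀ k, s.GammaDL P k = (β : ℂ) • ((s.H k)ᴴ * V * s.H k)
      + ((s.σe2 k : ℂ) * ((β : ℂ) * (s.Rb k * V).trace)) • s.Rm k + (s.σ2 : ℂ) • 1 := by
    intro k
    rw [MIMOSetup.GammaDL, hsumGPG]
    rw [Matrix.mul_smul, Matrix.smul_mul, Matrix.mul_smul, Matrix.trace_smul, smul_eq_mul]
  have hQU : ∀ k, (q k * ((s.U k)ᴴ * s.U k)).trace = (q k).trace := by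
    intro k
    simp only [hqdef, diagC]
    rw [trace_diag_mul]
    simp [s.hU k, Matrix.trace_diagonal]
  have hGU : ∀ k, (D k * ((s.G k)ᴴ * s.G k)).trace = (D k).trace := by
    intro k
    simp only [hDdef]
    rw [trace_diag_mul]
    simp [s.hG k, Matrix.trace_diagonal]
  have hTDL : ∀ k, (((P k)⁻¹ * s.αM k ^ 2 * (s.U k)ᴴ * s.GammaDL P k * s.U k).trace)
      = (q k * ((s.U k)ᴴ * ((s.H k)ᴴ * (V * (s.H k * s.U k))))).trace
        + (s.σe2 k : ℂ) * (s.Rb k * V).trace * (q k * ((s.U k)ᴴ * (s.Rm k * s.U k))).trace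
        + ((β : ℂ))⁻¹ * (s.σ2 : ℂ) * (q k).trace := by
    intro k
    rw [hPinv k, hΓDL k]
    simp only [Matrix.smul_mul, Matrix.mul_smul, Matrix.mul_add, Matrix.add_mul, Matrix.mul_one,
      Matrix.trace_add, Matrix.trace_smul, smul_eq_mul, Matrix.mul_assoc]
    rw [hQU k]
    field_simp
  -- scalar abbreviations
  set F : ∀ (_k : Fin K) (_i : Fin K), ℂ := fun k i =>
    (q k * ((s.U k)ᴴ * ((s.H k)ᴴ * (s.G i * (D i * ((s.G i)ᴴ * (s.H k * s.U k))))))).trace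
    with hFdef
  set F' : ∀ (_k : Fin K) (_i : Fin K), ℂ := fun k i =>
    (D k * ((s.G k)ᴴ * (s.H i * (s.U i * (diagC (Q i) * ((s.U i)ᴴ * ((s.H i)ᴴ * s.G k))))))).trace
    with hF'def
  set RT : Fin K → ℂ := fun k => (q k * ((s.U k)ᴴ * (s.Rm k * s.U k))).trace with hRTdef
  set W : Fin K → ℂ := fun i => (s.Rm i * (s.U i * (diagC (Q i) * (s.U i)ᴴ))).trace with hWdef
  set RBtr : ∀ (_k : Fin K) (_i : Fin K), ℂ := fun k i =>
    (s.Rb k * (s.G i * (D i * (s.G i)ᴴ))).trace with hRBtrdef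
  set RB : ∀ (_k : Fin K) (_i : Fin K), ℂ := fun k i =>
    (D k * ((s.G k)ᴴ * (s.Rb i * s.G k))).trace with hRBdef
  -- expansions of V-traces
  have hT1 : ∀ k, (q k * ((s.U k)ᴴ * ((s.H k)ᴴ * (V * (s.H k * s.U k))))).trace
      = ∑ i, F k i := by
    intro k
    rw [hVdef]
    simp only [Matrix.sum_mul, Matrix.mul_sum, Matrix.trace_sum, Matrix.mul_assoc, hFdef]
  have hRbV : ∀ k, (s.Rb k * V).trace = ∑ i, RBtr k i := by
    intro k
    rw [hVdef]
    simp only [Matrix.mul_sum, Matrix.trace_sum, Matrix.mul_assoc, hRBtrdef]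
  -- cyclic-trace identities
  have hFF' : ∀ k i, F k i = F' i k := by
    intro k i
    have h := Matrix.trace_mul_comm (q k * ((s.U k)ᴴ * ((s.H k)ᴴ * s.G i)))
      (D i * ((s.G i)ᴴ * (s.H k * s.U k)))
    simp only [hFdef, hF'def]
    simpa only [Matrix.mul_assoc, hqdef] using h
  have hRBeq : ∀ k i, RBtr k i = RB i k := by
    intro k i
    have h := Matrix.trace_mul_comm (s.Rb k * s.G i) (D i * (s.G i)ᴴ)
    simp only [hRBtrdef, hRBdef]
    simpa only [Matrix.mul_assoc] using h
  have hRTW : ∀ k, RT k = W k := by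
    intro k
    have h := Matrix.trace_mul_comm (s.Rm k * s.U k) (q k * (s.U k)ᴴ)
    simp only [hRTdef, hWdef]
    simpa only [Matrix.mul_assoc, hqdef] using h.symm
  have hLin : ∀ k, ((s.G k)ᴴ * s.H k * s.U k * s.αM k).trace
      = (s.αM k * (s.G k)ᴴ * s.H k * s.U k).trace := by
    intro k
    have h := Matrix.trace_mul_comm ((s.G k)ᴴ * (s.H k * s.U k)) (s.αM k)
    simpa only [Matrix.mul_assoc] using h
  -- the UL trace formula
  have hTUL : ∀ k, (((diagC (Q k))⁻¹ * s.αM k ^ 2 * (s.G k)ᴴ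
      * s.GammaC (fun k => diagC (Q k)) * s.G k).trace)
      = (∑ i, (F' k i + (s.σe2 i : ℂ) * W i * RB k i)) + (s.σ2 : ℂ) * (D k).trace := by
    intro k
    rw [show diagC (Q k) = q k from rfl, hDq k, MIMOSetup.GammaC]
    simp only [Matrix.smul_mul, Matrix.mul_smul, Matrix.mul_add, Matrix.add_mul, Matrix.mul_one,
      Matrix.trace_add, Matrix.trace_smul, smul_eq_mul, Matrix.mul_sum, Matrix.sum_mul,
      Matrix.trace_sum, Matrix.mul_assoc]
    rw [hGU k]
  -- cast facts
  have hnumC : (∑ k, (q k).trace) = ((num : ℝ) : ℂ) := by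
    rw [Finset.sum_congr rfl (fun k _ => htrq k), hnumdef]
    push_cast
    rfl
  have hdenC : (∑ k, (D k).trace) = ((den : ℝ) : ℂ) := by
    rw [Finset.sum_congr rfl (fun k _ => htrD k), hdendef]
    push_cast
    rfl
  -- key complex identity
  have key : (∑ k, ((q k * ((s.U k)ᴴ * ((s.H k)ᴴ * (V * (s.H k * s.U k))))).trace
        + (s.σe2 k : ℂ) * (s.Rb k * V).trace * RT k
        + ((β : ℂ))⁻¹ * (s.σ2 : ℂ) * (q k).trace))
      = ∑ k, ((∑ i, (F' k i + (s.σe2 i : ℂ) * W i * RB k i)) + (s.σ2 : ℂ) * (D k).trace) := by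
    have p1 : (∑ k, ∑ i, F k i) = ∑ k, ∑ i, F' k i := by
      have h1 : (∑ k, ∑ i, F k i) = ∑ i, ∑ k, F k i := Finset.sum_comm
      rw [h1]
      exact Finset.sum_congr rfl fun i _ => Finset.sum_congr rfl fun k _ => (hFF' k i)
    have p2 : (∑ k, (s.σe2 k : ℂ) * (∑ i, RBtr k i) * RT k)
        = ∑ k, ∑ i, (s.σe2 i : ℂ) * W i * RB k i := by
      have h2 : (∑ k, ∑ i, (s.σe2 k : ℂ) * W k * RB i k)
          = ∑ k, ∑ i, (s.σe2 i : ℂ) * W i * RB k i := Finset.sum_comm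
      rw [← h2]
      apply Finset.sum_congr rfl
      intro k _
      rw [Finset.mul_sum, Finset.sum_mul]
      apply Finset.sum_congr rfl
      intro i _
      rw [hRBeq k i, hRTW k]
      ring
    have p3 : (∑ k, ((β : ℂ))⁻¹ * (s.σ2 : ℂ) * (q k).trace)
        = ∑ k, (s.σ2 : ℂ) * (D k).trace := by
      rw [← Finset.mul_sum, ← Finset.mul_sum, hnumC, hdenC]
      have : ((num : ℝ) : ℂ) = (β : ℂ) * ((den : ℝ) : ℂ) := by
        rw [← hβden]; push_cast; ring
      rw [this]
      field_simp
    calc (∑ k, ((q k * ((s.U k)ᴴ * ((s.H k)ᴴ * (V * (s.H k * s.U k))))).trace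
        + (s.σe2 k : ℂ) * (s.Rb k * V).trace * RT k
        + ((β : ℂ))⁻¹ * (s.σ2 : ℂ) * (q k).trace))
        = (∑ k, ∑ i, F k i) + (∑ k, (s.σe2 k : ℂ) * (∑ i, RBtr k i) * RT k)
          + (∑ k, ((β : ℂ))⁻¹ * (s.σ2 : ℂ) * (q k).trace) := by
          rw [← Finset.sum_add_distrib, ← Finset.sum_add_distrib]
          exact Finset.sum_congr rfl fun k _ => by rw [hT1 k, hRbV k]
      _ = (∑ k, ∑ i, F' k i) + (∑ k, ∑ i, (s.σe2 i : ℂ) * W i * RB k i)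
          + (∑ k, (s.σ2 : ℂ) * (D k).trace) := by rw [p1, p2, p3]
      _ = ∑ k, ((∑ i, (F' k i + (s.σe2 i : ℂ) * W i * RB k i)) + (s.σ2 : ℂ) * (D k).trace) := by
          rw [← Finset.sum_add_distrib, ← Finset.sum_add_distrib]
          exact Finset.sum_congr rfl fun k _ => by rw [Finset.sum_add_distrib]
  constructor
  · -- equality of sum AMSEs
    have e1 : s.xiDL P = ∑ k, ((s.S k : ℝ)
        + ((q k * ((s.U k)ᴴ * ((s.H k)ᴴ * (V * (s.H k * s.U k))))).trace
          + (s.σe2 k : ℂ) * (s.Rb k * V).trace * RT k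
          + ((β : ℂ))⁻¹ * (s.σ2 : ℂ) * (q k).trace).re
        - 2 * ((s.αM k * (s.G k)ᴴ * s.H k * s.U k).trace).re) := by
      rw [MIMOSetup.xiDL]
      apply Finset.sum_congr rfl
      intro k _
      rw [MIMOSetup.xiDLk, hTDL k, hLin k]
    have e2 : s.xiUL (fun k => diagC (Q k)) = ∑ k, ((s.S k : ℝ)
        + ((∑ i, (F' k i + (s.σe2 i : ℂ) * W i * RB k i)) + (s.σ2 : ℂ) * (D k).trace).re
        - 2 * ((s.αM k * (s.G k)ᴴ * s.H k * s.U k).trace).re) := by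
      rw [MIMOSetup.xiUL]
      apply Finset.sum_congr rfl
      intro k _
      rw [MIMOSetup.xiULk, hTUL k]
    rw [e1, e2]
    rw [Finset.sum_sub_distrib, Finset.sum_sub_distrib, Finset.sum_add_distrib,
      Finset.sum_add_distrib, ← Complex.re_sum, ← Complex.re_sum, key]
  · -- equality of allocated sum powers
    have : (∑ k, (P k).trace) = (β : ℂ) * ∑ k, (D k).trace := by
      rw [Finset.mul_sum]
      exact Finset.sum_congr rfl fun k _ => by
        rw [hPsmul k, Matrix.trace_smul, smul_eq_mul]
    rw [this, hdenC, show (∑ k, (diagC (Q k)).trace) = ∑ k, (q k).trace from rfl, hnumC,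
      ← hβden]
    push_cast
    ring
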